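/- Let f : ℝ^N → ℝ be differentiable, let x₀, …, x_n ∈ ℝ^N, let φ(x) = Ux be a linear isometry of ℝ^N (U an orthogonal matrix), and define g := f ∘ φ and y_k := φ⁻¹(x_k) for k = 0, …, n. Then the information vectors coincide exactly: (f(x_k) : k ≤ n) ∪ (⟨v,w⟩ : v,w ∈ (x₀) ∪ (∇f(x_k) : k ≤ n)) = (g(y_k) : k ≤ n) ∪ (⟨v,w⟩ : v,w ∈ (y₀) ∪ (∇g(y_k) : k ≤ n)). If φ is a general isometry of the form φ(x) = Ux + b, then the reduced information vectors still coincide: (f(x_k), ⟨∇f(x_k), ∇f(x_l)⟩ : k, l ≤ n) = (g(y_k), ⟨∇g(y_k), ∇g(y_l)⟩ : k, l ≤ n). -/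

import Mathlib

open MeasureTheory ProbabilityTheory Filter
open scoped ENNReal NNReal InnerProductSpace Topology BigOperators

noncomputable section

/-- Euclidean space `ℝ^N`. -/
abbrev EucSp (N : ℕ) : Type := EuclideanSpace ℝ (Fin N)

/-- Convergence in probability (along the dimension index `N → ∞`)
of real random variables to a deterministic constant. -/
def TendstoInProb {Ω : Type*} [MeasurableSpace Ω] (P : Measure Ω)
    (Z : ℕ → Ω → ℝ) (c : ℝ) : Prop :=
  ∀ ε : ℝ, 0 < ε → Tendsto (fun N => P {ω | ε < |Z N ω - c|}) atTop (𝓝 0)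

/-- The mean function of a random function. -/
def meanRF {Ω : Type*} [MeasurableSpace Ω] (P : Measure Ω) {N : ℕ}
    (f : Ω → EucSp N → ℝ) (x : EucSp N) : ℝ :=
  ∫ ω, f ω x ∂P

/-- The covariance function of a random function. -/
def covRF {Ω : Type*} [MeasurableSpace Ω] (P : Measure Ω) {N : ℕ}
    (f : Ω → EucSp N → ℝ) (x y : EucSp N) : ℝ :=
  ∫ ω, (f ω x - meanRF P f x) * (f ω y - meanRF P f y) ∂P

/-- Covariance of two real random variables. -/
def covRV {Ω : Type*} [MeasurableSpace Ω] (P : Measure Ω) (g h : Ω → ℝ) : ℝ :=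
  ∫ ω, (g ω - ∫ ω', g ω' ∂P) * (h ω - ∫ ω', h ω' ∂P) ∂P

/-- A Gaussian random function: every finite linear combination of evaluations
has a (possibly degenerate) Gaussian distribution. -/
def IsGaussianRF {Ω : Type*} [MeasurableSpace Ω] (P : Measure Ω) {N : ℕ}
    (f : Ω → EucSp N → ℝ) : Prop :=
  ∀ (n : ℕ) (x : Fin n → EucSp N) (c : Fin n → ℝ), ∃ (m : ℝ) (v : ℝ≥0),
    Measure.map (fun ω => ∑ i, c i * f ω (x i)) P = gaussianReal m v

/-- A (non-stationary) isotropic scaled random function: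
mean `μ(‖x‖²/2)` and covariance `(1/N)·κ(‖x‖²/2, ‖y‖²/2, ⟨x,y⟩)`. -/
def IsIsotropicRF {Ω : Type*} [MeasurableSpace Ω] (P : Measure Ω) {N : ℕ}
    (f : Ω → EucSp N → ℝ) (μ : ℝ → ℝ) (κ : ℝ → ℝ → ℝ → ℝ) : Prop :=
  (∀ x, meanRF P f x = μ (‖x‖ ^ 2 / 2)) ∧
  (∀ x y, covRF P f x y = (1 / (N : ℝ)) * κ (‖x‖ ^ 2 / 2) (‖y‖ ^ 2 / 2) ⟪x, y⟫_ℝ)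

/-- A stationary isotropic scaled random function:
constant mean `μ` and covariance `(1/N)·C(‖x−y‖²/2)`. -/
def IsStationaryIsotropicRF {Ω : Type*} [MeasurableSpace Ω] (P : Measure Ω) {N : ℕ}
    (f : Ω → EucSp N → ℝ) (μ : ℝ) (C : ℝ → ℝ) : Prop :=
  (∀ x, meanRF P f x = μ) ∧
  (∀ x y, covRF P f x y = (1 / (N : ℝ)) * C (‖x - y‖ ^ 2 / 2))

/-- A (non-stationary) isotropic kernel is valid in all dimensions if a corresponding
(non-stationary) isotropic Gaussian random function exists in every dimension. -/
def ValidInAllDimensions (μ : ℝ → ℝ) (κ : ℝ → ℝ → ℝ → ℝ) : Prop :=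
  ∀ N : ℕ, ∃ (Ω' : Type) (_ : MeasurableSpace Ω') (P : Measure Ω') (f : Ω' → EucSp N → ℝ),
    IsProbabilityMeasure P ∧ IsGaussianRF P f ∧ IsIsotropicRF P f μ κ

/-- A stationary isotropic kernel is valid in all dimensions if a corresponding
stationary isotropic Gaussian random function exists in every dimension. -/
def ValidInAllDimensionsStat (μ : ℝ) (C : ℝ → ℝ) : Prop :=
  ∀ N : ℕ, ∃ (Ω' : Type) (_ : MeasurableSpace Ω') (P : Measure Ω') (f : Ω' → EucSp N → ℝ),
    IsProbabilityMeasure P ∧ IsGaussianRF P f ∧ IsStationaryIsotropicRF P f μ C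

/-- Sufficient smoothness of a (non-stationary) isotropic kernel: the partial
derivatives `κ₁₂, κ₁₃, κ₂₃, κ₃₃` exist and are continuous. -/
def KernelSufficientlySmooth (κ : ℝ → ℝ → ℝ → ℝ) : Prop :=
  ∃ κ₁ κ₂ κ₃ κ₁₂ κ₁₃ κ₂₃ κ₃₃ : ℝ → ℝ → ℝ → ℝ,
    (∀ a b c, HasDerivAt (fun t => κ t b c) (κ₁ a b c) a) ∧
    (∀ a b c, HasDerivAt (fun t => κ a t c) (κ₂ a b c) b) ∧
    (∀ a b c, HasDerivAt (fun t => κ a b t) (κ₃ a b c) c) ∧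
    (∀ a b c, HasDerivAt (fun t => κ₁ a t c) (κ₁₂ a b c) b) ∧
    (∀ a b c, HasDerivAt (fun t => κ₁ a b t) (κ₁₃ a b c) c) ∧
    (∀ a b c, HasDerivAt (fun t => κ₂ a b t) (κ₂₃ a b c) c) ∧
    (∀ a b c, HasDerivAt (fun t => κ₃ a b t) (κ₃₃ a b c) c) ∧
    Continuous (fun p : ℝ × ℝ × ℝ => κ₁₂ p.1 p.2.1 p.2.2) ∧
    Continuous (fun p : ℝ × ℝ × ℝ => κ₁₃ p.1 p.2.1 p.2.2) ∧
    Continuous (fun p : ℝ × ℝ × ℝ => κ₂₃ p.1 p.2.1 p.2.2) ∧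
    Continuous (fun p : ℝ × ℝ × ℝ => κ₃₃ p.1 p.2.1 p.2.2)

/-- Sufficient smoothness of the mean: a continuous derivative exists. -/
def MeanSufficientlySmooth (μ : ℝ → ℝ) : Prop :=
  ∃ μ' : ℝ → ℝ, (∀ a, HasDerivAt μ (μ' a) a) ∧ Continuous μ'

/-- Strict positive definiteness of the pair `(f, ∇f)`: any vanishing variance of a
finite linear combination of values and gradient entries at distinct points forces
all coefficients to vanish. -/
def StrictPosDefPair {Ω : Type*} [MeasurableSpace Ω] (P : Measure Ω) {N : ℕ}
    (f : Ω → EucSp N → ℝ) : Prop :=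
  ∀ (n : ℕ) (x : Fin n → EucSp N), Function.Injective x →
    ∀ (w : Fin n → ℝ) (u : Fin n → EucSp N),
      variance (fun ω => ∑ i, (w i * f ω (x i) + ⟪u i, gradient (f ω) (x i)⟫_ℝ)) P = 0 →
      ∀ i, w i = 0 ∧ u i = 0

/-- The dimensionless information: values of the function along the path together with
all inner products of `x₀` and the encountered gradients. -/
abbrev InfoVec : Type := (ℕ → ℝ) × (ℕ → ℕ → ℝ)

/-- A general gradient span algorithm, given by its prefactors, which are functions
of the dimensionless information. -/
structure GSA where
  hx : ℕ → InfoVec → ℝ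
  hg : ℕ → ℕ → InfoVec → ℝ

/-- The information vector `I_n` available at time `n`: function values `f(x_k)`, `k ≤ n`,
and all inner products of the vectors `x₀, ∇f(x₀), …, ∇f(x_n)` (encoded with index `0`
for `x₀` and index `k+1` for `∇f(x_k)`; entries beyond the horizon are set to `0`). -/
def information {N : ℕ} (f : EucSp N → ℝ) (x : ℕ → EucSp N) (n : ℕ) : InfoVec :=
  (fun k => if k ≤ n then f (x k) else 0,
   fun i j =>
     (let v : ℕ → EucSp N := fun i =>
        if i = 0 then x 0 else if i - 1 ≤ n then gradient f (x (i - 1)) else 0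
      ⟪v i, v j⟫_ℝ))

/-- The reduced information vector `I_n^{∖x₀}`: function values and inner products of
gradients only. -/
def redInformation {N : ℕ} (f : EucSp N → ℝ) (x : ℕ → EucSp N) (n : ℕ) : InfoVec :=
  (fun k => if k ≤ n then f (x k) else 0,
   fun k l => if k ≤ n ∧ l ≤ n then ⟪gradient f (x k), gradient f (x l)⟫_ℝ else 0)

/-- `x` is the path produced by the gradient span algorithm `G` applied to `f` with
starting point `x₀`:  `x_{n+1} = h^{(x)}_{n+1}(I_n)·x₀ + ∑_{k ≤ n} h^{(g)}_{n+1,k}(I_n)·∇f(x_k)`. -/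
def GSA.IsPath {N : ℕ} (G : GSA) (f : EucSp N → ℝ) (x0 : EucSp N) (x : ℕ → EucSp N) : Prop :=
  x 0 = x0 ∧
  ∀ n : ℕ, x (n + 1) =
    G.hx (n + 1) (information f x n) • x0 +
      ∑ k ∈ Finset.range (n + 1), G.hg (n + 1) k (information f x n) • gradient f (x k)

/-- `G` is `x₀`-agnostic: it stays in the span shifted by `x₀` (`h^{(x)} = 1`) and its
prefactors depend only on the reduced information (no inner products with `x₀`). -/
def GSA.X0Agnostic (G : GSA) : Prop :=
  (∀ n ι, G.hx n ι = 1) ∧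
  (∀ n k (ι ι' : InfoVec), ι.1 = ι'.1 →
    (∀ i j : ℕ, ι.2 (i + 1) (j + 1) = ι'.2 (i + 1) (j + 1)) → G.hg n k ι = G.hg n k ι')

/-- The family of vectors `x₀, ∇f(x₀), ∇f(x₁), …` generating the previsible vector spaces of
evaluation points. -/
def gsVecs {N : ℕ} (f : EucSp N → ℝ) (x : ℕ → EucSp N) : ℕ → EucSp N
  | 0 => x 0
  | k + 1 => gradient f (x k)

/-- `d_n`: the dimension of the previsible vector space of evaluation points
`V_n = span{x₀, ∇f(x_k) : k < n}`. -/
def dimSpan {N : ℕ} (f : EucSp N → ℝ) (x : ℕ → EucSp N) (n : ℕ) : ℕ :=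
  Module.finrank ℝ (Submodule.span ℝ (gsVecs f x '' Set.Iic n))

/-- The modified information vector `Î_n`: function values along the path together with
the inner products of the Gram–Schmidt orthonormal coordinate system with the gradients
(truncated to the relevant range). -/
def minfoAt {N : ℕ} (f : EucSp N → ℝ) (x : ℕ → EucSp N) (n : ℕ) : InfoVec :=
  (fun k => if k ≤ n then f (x k) else 0,
   fun i k => if i < n + 2 ∧ k ≤ n then
      ⟪InnerProductSpace.gramSchmidtNormed ℝ (gsVecs f x) i, gradient f (x k)⟫_ℝ else 0)

/-- Strict positive definiteness of `(f, ∇f, (∂_{ij}f)_{i≤j}, …)` up to order `k`: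
coefficients are indexed by points, by the order `l ≤ k` of differentiation and by sorted
(monotone) index tuples `i₁ ≤ … ≤ i_l`. -/
def StrictPosDefDerivs {Ω : Type*} [MeasurableSpace Ω] (P : Measure Ω) {N : ℕ}
    (f : Ω → EucSp N → ℝ) (k : ℕ) : Prop :=
  ∀ (n : ℕ) (x : Fin n → EucSp N), Function.Injective x →
    ∀ w : (j : Fin n) → (l : Fin (k + 1)) → ((Fin (l : ℕ) → Fin N) → ℝ),
      (∀ j l idx, ¬ Monotone idx → w j l idx = 0) →
      variance (fun ω => ∑ j, ∑ l : Fin (k + 1), ∑ idx : Fin (l : ℕ) → Fin N,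
        w j l idx *
          iteratedFDeriv ℝ (l : ℕ) (f ω) (x j) (fun s => EuclideanSpace.single (idx s) 1)) P
        = 0 →
      ∀ j l idx, w j l idx = 0

end


lemma grad_comp_isom {F : Type*} [NormedAddCommGroup F] [InnerProductSpace ℝ F]
    [CompleteSpace F]
    (f : F → ℝ) (L : F ≃ₗᵢ[ℝ] F) (b : F) (y : F) (hf : DifferentiableAt ℝ f (L y + b)) :
    gradient (fun x => f (L x + b)) y = L.symm (gradient f (L y + b)) := by
  have hL : HasFDerivAt (fun x : F => L x + b)
      (L.toContinuousLinearEquiv.toContinuousLinearMap) y := by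
    simpa using
      (L.toContinuousLinearEquiv.toContinuousLinearMap.hasFDerivAt (x := y)).add_const b
  have hcomp : HasFDerivAt (fun x => f (L x + b))
      ((fderiv ℝ f (L y + b)).comp L.toContinuousLinearEquiv.toContinuousLinearMap)
      y := hf.hasFDerivAt.comp y hL
  have key : (InnerProductSpace.toDual ℝ F) (L.symm (gradient f (L y + b))) =
      (fderiv ℝ f (L y + b)).comp L.toContinuousLinearEquiv.toContinuousLinearMap := by
    ext v
    have h1 : ⟪L.symm (gradient f (L y + b)), v⟫_ℝ = ⟪gradient f (L y + b), L v⟫_ℝ := by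
      rw [← L.inner_map_map (L.symm (gradient f (L y + b))) v, L.apply_symm_apply]
    simp only [InnerProductSpace.toDual_apply_apply, ContinuousLinearMap.comp_apply]
    rw [h1]
    have := hf.hasGradientAt
    rw [hasGradientAt_iff_hasFDerivAt] at this
    have h2 := this.unique hf.hasFDerivAt
    rw [← h2, InnerProductSpace.toDual_apply_apply]; rfl
  have : HasGradientAt (fun x => f (L x + b)) (L.symm (gradient f (L y + b))) y := by
    rw [hasGradientAt_iff_hasFDerivAt, key]; exact hcomp
  exact this.gradient

/-- Lemma: the information is invariant under linear isometries.
For differentiable `f`, points `x₀, …, x_n`, a linear isometry `φ`, `g := f ∘ φ` and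
`y_k := φ⁻¹(x_k)`, the information vectors of `(f, x)` and `(g, y)` coincide exactly.
For a general (affine) isometry `φ(x) = Ux + b` the reduced information vectors coincide. -/
theorem information_invariant_under_isometries
    {N : ℕ} (f : EucSp N → ℝ) (hf : Differentiable ℝ f)
    (x : ℕ → EucSp N) (n : ℕ) :
    (∀ φ : EucSp N ≃ₗᵢ[ℝ] EucSp N,
      information f x n = information (f ∘ φ) (fun k => φ.symm (x k)) n) ∧
    (∀ φ : EucSp N ≃ᵃⁱ[ℝ] EucSp N,
      redInformation f x n = redInformation (f ∘ φ) (fun k => φ.symm (x k)) n) := by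
  constructor
  · intro φ
    have hgrad : ∀ k, gradient (f ∘ φ) (φ.symm (x k)) = φ.symm (gradient f (x k)) := by
      intro k
      have hfc : (f ∘ φ) = fun z => f (φ z + 0) := by funext z; simp
      rw [hfc, grad_comp_isom f φ 0 _ (by simpa using hf.differentiableAt)]
      simp
    unfold information
    refine Prod.ext ?_ ?_
    · funext k
      by_cases hk : k ≤ n <;> simp [hk]
    · funext i j
      simp only
      have hv : ∀ i : ℕ,
          (if i = 0 then φ.symm (x 0) else if i - 1 ≤ n then
            gradient (f ∘ φ) (φ.symm (x (i - 1))) else 0) =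
          φ.symm (if i = 0 then x 0 else if i - 1 ≤ n then gradient f (x (i - 1)) else 0) := by
        intro i
        by_cases h0 : i = 0
        · simp [h0]
        · by_cases h1 : i - 1 ≤ n <;> simp [h0, h1, hgrad]
      rw [hv i, hv j, LinearIsometryEquiv.inner_map_map]
  · intro φ
    set L := φ.linearIsometryEquiv with hLdef
    have hφ : ∀ z, φ z = L z + φ 0 := by
      intro z
      have := φ.map_vadd 0 z
      simpa [vadd_eq_add] using this
    have hgrad : ∀ k, gradient (f ∘ φ) (φ.symm (x k)) = L.symm (gradient f (x k)) := by
      intro k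
      have hfc : (f ∘ φ) = fun z => f (L z + φ 0) := by funext z; simp [← hφ]
      have hx : L (φ.symm (x k)) + φ 0 = x k := by rw [← hφ]; simp
      rw [hfc, grad_comp_isom f L (φ 0) _ (by rw [hx]; exact hf.differentiableAt), hx]
    unfold redInformation
    refine Prod.ext ?_ ?_
    · funext k
      by_cases hk : k ≤ n <;> simp [hk]
    · funext k l
      by_cases hk : k ≤ n ∧ l ≤ n <;>
        simp [hk, hgrad, LinearIsometryEquiv.inner_map_map]
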